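/- Let T : Fin 3 × Fin 3 × Fin 3 → ℂ be a sum of at most 4 rank-one tensors, with slices A=(T(i,j,1)), B=(T(i,j,2)), C=(T(i,j,3)), and suppose det B ≠ 0. Then det(A · B⁻¹ · C − C · B⁻¹ · A) = 0. -/

import Mathlib

open Matrix Polynomial


lemma det_two_rank_one (u1 v1 u2 v2 : Fin 3 → ℂ) :
    (vecMulVec u1 v1 + vecMulVec u2 v2).det = 0 := by
  have h : vecMulVec u1 v1 + vecMulVec u2 v2 =
      (Matrix.of fun i k => ![u1 i, u2 i, 0] k) * (Matrix.of fun k j => ![v1 j, v2 j, 0] k) := by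
    ext i j
    simp [Matrix.mul_apply, vecMulVec, Fin.sum_univ_three]
  rw [h, Matrix.det_mul]
  have h2 : (Matrix.of fun k j => ![v1 j, v2 j, (0:ℂ)] k).det = 0 :=
    Matrix.det_eq_zero_of_row_eq_zero 2 (by simp)
  simp [h2]

lemma diag_vecMulVec_diag (a b u w : Fin 4 → ℂ) :
    diagonal a * vecMulVec u w * diagonal b = vecMulVec (a * u) (w * b) := by
  ext m n
  simp only [Matrix.mul_diagonal, Matrix.diagonal_mul, vecMulVec_apply, Pi.mul_apply]
  ring

lemma sandwich (M : Matrix (Fin 3) (Fin 4) ℂ) (N : Matrix (Fin 4) (Fin 3) ℂ) (p q : Fin 4 → ℂ) :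
    M * vecMulVec p q * N = vecMulVec (M *ᵥ p) (q ᵥ* N) := by
  rw [vecMulVec_eq Unit, vecMulVec_eq Unit, replicateCol_mulVec, replicateRow_vecMul]
  simp only [Matrix.mul_assoc]

lemma strassen_core (x y z : Fin 4 → Fin 3 → ℂ) (A B C : Matrix (Fin 3) (Fin 3) ℂ)
    (hA : ∀ i j, A i j = ∑ m : Fin 4, x m i * y m j * z m 0)
    (hB : ∀ i j, B i j = ∑ m : Fin 4, x m i * y m j * z m 1)
    (hC : ∀ i j, C i j = ∑ m : Fin 4, x m i * y m j * z m 2)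
    (hz : ∀ m, z m 1 ≠ 0) (hdet : B.det ≠ 0) :
    (A * B⁻¹ * C - C * B⁻¹ * A).det = 0 := by
  set Xm : Matrix (Fin 3) (Fin 4) ℂ := Matrix.of fun i m => x m i * z m 1 with hXm
  set Yt : Matrix (Fin 4) (Fin 3) ℂ := Matrix.of fun m j => y m j with hYt
  have hXY : Xm * Yt = B := by
    ext i j
    rw [hB]
    simp only [Matrix.mul_apply, hXm, hYt, Matrix.of_apply]
    exact Finset.sum_congr rfl fun m _ => by ring
  set α : Fin 4 → ℂ := fun m => z m 0 * (z m 1)⁻¹ with hα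
  set γ : Fin 4 → ℂ := fun m => z m 2 * (z m 1)⁻¹ with hγ
  have hXdiag : ∀ w : Fin 4 → ℂ, Xm * diagonal w = Matrix.of fun i m => x m i * z m 1 * w m := by
    intro w
    ext i m
    rw [Matrix.mul_diagonal]
    simp [hXm]
  have hAeq : Xm * diagonal α * Yt = A := by
    ext i j
    rw [hA, hXdiag]
    simp only [Matrix.mul_apply, hYt, hα, Matrix.of_apply]
    refine Finset.sum_congr rfl fun m _ => ?_
    field_simp [hz m]
  have hCeq : Xm * diagonal γ * Yt = C := by
    ext i j
    rw [hC, hXdiag]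
    simp only [Matrix.mul_apply, hYt, hγ, Matrix.of_apply]
    refine Finset.sum_congr rfl fun m _ => ?_
    field_simp [hz m]
  have hBB : B * B⁻¹ = 1 := Matrix.mul_nonsing_inv B hdet.isUnit
  have hBB' : B⁻¹ * B = 1 := Matrix.nonsing_inv_mul B hdet.isUnit
  set P : Matrix (Fin 4) (Fin 4) ℂ := Yt * B⁻¹ * Xm with hP
  set Q : Matrix (Fin 4) (Fin 4) ℂ := 1 - P with hQ
  have hXP : Xm * P = Xm := by
    rw [hP, ← Matrix.mul_assoc, ← Matrix.mul_assoc, hXY, hBB, Matrix.one_mul]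
  have hPY : P * Yt = Yt := by
    rw [hP, Matrix.mul_assoc, hXY, Matrix.mul_assoc, hBB', Matrix.mul_one]
  have hXQ : Xm * Q = 0 := by
    rw [hQ, Matrix.mul_sub, Matrix.mul_one, hXP, sub_self]
  have h1 : A * B⁻¹ * C = Xm * (diagonal α * P * diagonal γ) * Yt := by
    rw [← hAeq, ← hCeq, hP]
    simp only [Matrix.mul_assoc]
  have h2 : C * B⁻¹ * A = Xm * (diagonal γ * P * diagonal α) * Yt := by
    rw [← hAeq, ← hCeq, hP]
    simp only [Matrix.mul_assoc]
  have hc : diagonal α * diagonal γ = diagonal γ * diagonal α := by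
    have hfun : (fun i => α i * γ i) = fun i => γ i * α i := by funext i; ring
    rw [diagonal_mul_diagonal, diagonal_mul_diagonal, hfun]
  have hD : diagonal α * P * diagonal γ - diagonal γ * P * diagonal α
      = diagonal γ * Q * diagonal α - diagonal α * Q * diagonal γ := by
    have hPQ : P = 1 - Q := by rw [hQ]; abel
    rw [hPQ]
    simp only [Matrix.mul_sub, Matrix.sub_mul, Matrix.mul_one, Matrix.one_mul]
    rw [hc]
    abel
  have hcomm : A * B⁻¹ * C - C * B⁻¹ * A
      = Xm * (diagonal γ * Q * diagonal α - diagonal α * Q * diagonal γ) * Yt := by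
    rw [h1, h2, ← Matrix.sub_mul, ← Matrix.mul_sub, hD]
  -- Q has rank ≤ 1 : every column lies in ker of Xm, which is 1-dimensional
  have hsurj : Function.Surjective Xm.mulVecLin := by
    intro v
    refine ⟨(Yt * B⁻¹).mulVec v, ?_⟩
    have : Xm * (Yt * B⁻¹) = 1 := by
      rw [← Matrix.mul_assoc, hXY, hBB]
    calc Xm.mulVecLin ((Yt * B⁻¹).mulVec v) = (Xm * (Yt * B⁻¹)).mulVec v := by
          rw [Matrix.mulVecLin_apply, Matrix.mulVec_mulVec]
      _ = v := by rw [this, Matrix.one_mulVec]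
  have hker : Module.finrank ℂ (LinearMap.ker Xm.mulVecLin) = 1 := by
    have h4 := LinearMap.finrank_range_add_finrank_ker Xm.mulVecLin
    rw [LinearMap.range_eq_top.2 hsurj] at h4
    simp only [finrank_top, Module.finrank_pi, Fintype.card_fin] at h4
    omega
  obtain ⟨u0, hu0, hspan⟩ := (finrank_eq_one_iff').1 hker
  have hcol : ∀ n, (fun m => Q m n) ∈ LinearMap.ker Xm.mulVecLin := by
    intro n
    rw [LinearMap.mem_ker]
    funext i
    have h0 := congrFun (congrFun hXQ i) n
    simpa [Matrix.mulVecLin_apply, Matrix.mulVec, dotProduct, Matrix.mul_apply] using h0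
  choose c hc2 using fun n => hspan ⟨fun m => Q m n, hcol n⟩
  have hQvv : Q = vecMulVec (u0 : Fin 4 → ℂ) c := by
    ext m n
    have h0 := congrFun (congrArg Subtype.val (hc2 n)) m
    simp only [SetLike.val_smul, Pi.smul_apply, smul_eq_mul] at h0
    rw [vecMulVec_apply, ← h0]
    ring
  rw [hcomm, Matrix.mul_sub, Matrix.sub_mul, hQvv, diag_vecMulVec_diag, diag_vecMulVec_diag,
    sandwich, sandwich]
  have hneg : ∀ (p q : Fin 3 → ℂ), - vecMulVec p q = vecMulVec (-p) q := by
    intro p q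
    ext i j
    simp [vecMulVec_apply]
  rw [sub_eq_add_neg, hneg]
  exact det_two_rank_one _ _ _ _

lemma adj_eq_smul_inv (B : Matrix (Fin 3) (Fin 3) ℂ) (hdet : B.det ≠ 0) :
    B.adjugate = B.det • B⁻¹ := by
  rw [Matrix.inv_def, Ring.inverse_eq_inv', smul_smul, mul_inv_cancel₀ hdet, one_smul]

lemma strassen_core_adj (x y z : Fin 4 → Fin 3 → ℂ) (A B C : Matrix (Fin 3) (Fin 3) ℂ)
    (hA : ∀ i j, A i j = ∑ m : Fin 4, x m i * y m j * z m 0)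
    (hB : ∀ i j, B i j = ∑ m : Fin 4, x m i * y m j * z m 1)
    (hC : ∀ i j, C i j = ∑ m : Fin 4, x m i * y m j * z m 2)
    (hz : ∀ m, z m 1 ≠ 0) (hdet : B.det ≠ 0) :
    (A * B.adjugate * C - C * B.adjugate * A).det = 0 := by
  have h : A * B.adjugate * C - C * B.adjugate * A
      = B.det • (A * B⁻¹ * C - C * B⁻¹ * A) := by
    rw [adj_eq_smul_inv B hdet]
    simp only [Matrix.mul_smul, Matrix.smul_mul, smul_sub]
  rw [h, Matrix.det_smul, strassen_core x y z A B C hA hB hC hz hdet, mul_zero]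

lemma strassen_adj (x y z : Fin 4 → Fin 3 → ℂ) (A B C : Matrix (Fin 3) (Fin 3) ℂ)
    (hA : ∀ i j, A i j = ∑ m : Fin 4, x m i * y m j * z m 0)
    (hB : ∀ i j, B i j = ∑ m : Fin 4, x m i * y m j * z m 1)
    (hC : ∀ i j, C i j = ∑ m : Fin 4, x m i * y m j * z m 2)
    (hdet : B.det ≠ 0) :
    (A * B.adjugate * C - C * B.adjugate * A).det = 0 := by
  classical
  set M : Matrix (Fin 3) (Fin 3) ℂ := Matrix.of fun i j => ∑ m : Fin 4, x m i * y m j with hM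
  have hBfeq : ∀ (ε : ℂ) (i j : Fin 3),
      (B + ε • M) i j = ∑ m : Fin 4, x m i * y m j * (z m 1 + ε) := by
    intro ε i j
    simp only [Matrix.add_apply, Matrix.smul_apply, hM, Matrix.of_apply, hB, smul_eq_mul,
      Finset.mul_sum]
    rw [← Finset.sum_add_distrib]
    exact Finset.sum_congr rfl fun m _ => by ring
  set Ap : Matrix (Fin 3) (Fin 3) ℂ[X] := A.map Polynomial.C with hAp
  set Cp : Matrix (Fin 3) (Fin 3) ℂ[X] := C.map Polynomial.C with hCp
  set Bp : Matrix (Fin 3) (Fin 3) ℂ[X] :=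
    B.map Polynomial.C + (Polynomial.X : ℂ[X]) • M.map Polynomial.C with hBp
  set p : ℂ[X] := (Ap * Bp.adjugate * Cp - Cp * Bp.adjugate * Ap).det with hp
  have hmapB : ∀ ε : ℂ, (Polynomial.evalRingHom ε).mapMatrix Bp = B + ε • M := by
    intro ε
    rw [RingHom.mapMatrix_apply, hBp]
    ext i j
    simp only [Matrix.map_apply, Matrix.add_apply, Matrix.smul_apply, smul_eq_mul,
      Polynomial.coe_evalRingHom, Polynomial.eval_add, Polynomial.eval_mul, Polynomial.eval_X,
      Polynomial.eval_C]
  have hmapA : (Polynomial.evalRingHom 0).mapMatrix Ap = A ∧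
      ∀ ε : ℂ, (Polynomial.evalRingHom ε).mapMatrix Ap = A := by
    refine ⟨?_, ?_⟩ <;>
      [skip; intro ε] <;> · rw [RingHom.mapMatrix_apply, hAp]; ext i j; simp
  have hmapA' : ∀ ε : ℂ, (Polynomial.evalRingHom ε).mapMatrix Ap = A := hmapA.2
  have hmapC' : ∀ ε : ℂ, (Polynomial.evalRingHom ε).mapMatrix Cp = C := by
    intro ε; rw [RingHom.mapMatrix_apply, hCp]; ext i j; simp
  have hpeval : ∀ ε : ℂ,
      p.eval ε = (A * (B + ε • M).adjugate * C - C * (B + ε • M).adjugate * A).det := by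
    intro ε
    have h0 := (Polynomial.evalRingHom ε).map_det (Ap * Bp.adjugate * Cp - Cp * Bp.adjugate * Ap)
    rw [show (Polynomial.evalRingHom ε) ((Ap * Bp.adjugate * Cp - Cp * Bp.adjugate * Ap).det)
        = p.eval ε from rfl] at h0
    rw [h0, map_sub, _root_.map_mul, _root_.map_mul, _root_.map_mul, _root_.map_mul,
      RingHom.map_adjugate, hmapA' ε, hmapB ε, hmapC' ε]
  have hBpdet : ∀ ε : ℂ, Bp.det.eval ε = (B + ε • M).det := by
    intro ε
    have h0 := (Polynomial.evalRingHom ε).map_det Bp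
    rw [hmapB ε] at h0
    exact h0
  have hgood : ∀ ε : ℂ, (B + ε • M).det ≠ 0 → (∀ m, z m 1 + ε ≠ 0) → p.eval ε = 0 := by
    intro ε hd hzz
    rw [hpeval ε]
    exact strassen_core_adj x y
      (fun m k => if k = 1 then z m 1 + ε else z m k) A (B + ε • M) C
      (by intro i j; rw [hA]
          exact Finset.sum_congr rfl fun m _ => by
            simp only [if_neg (show ¬((0 : Fin 3) = 1) by decide)])
      (by intro i j
          rw [hBfeq ε i j]
          exact Finset.sum_congr rfl fun m _ => by
            simp)
      (by intro i j; rw [hC]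
          exact Finset.sum_congr rfl fun m _ => by
            simp only [if_neg (show ¬((2 : Fin 3) = 1) by decide)])
      (fun m => by simpa using hzz m) hd
  set q : ℂ[X] := Bp.det * ∏ m : Fin 4, (Polynomial.X + Polynomial.C (z m 1)) with hq
  have hB0 : B + (0 : ℂ) • M = B := by simp
  have hq0 : q ≠ 0 := by
    apply mul_ne_zero
    · intro h
      apply hdet
      have h0 := hBpdet 0
      rw [h, hB0] at h0
      simpa using h0.symm
    · exact Finset.prod_ne_zero_iff.2 fun m _ => Polynomial.X_add_C_ne_zero (z m 1)
  have hqeval : ∀ ε : ℂ, q.eval ε ≠ 0 → p.eval ε = 0 := by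
    intro ε hεq
    simp only [hq, Polynomial.eval_mul, Polynomial.eval_prod, Polynomial.eval_add,
      Polynomial.eval_X, Polynomial.eval_C, mul_ne_zero_iff, Finset.prod_ne_zero_iff] at hεq
    refine hgood ε ?_ ?_
    · rw [← hBpdet ε]; exact hεq.1
    · intro m
      have h1 := hεq.2 m (Finset.mem_univ m)
      rw [add_comm]
      exact h1
  have hp0 : p = 0 := by
    apply Polynomial.eq_zero_of_infinite_isRoot
    have hfin : ({ε : ℂ | q.IsRoot ε}).Finite := Polynomial.finite_setOf_isRoot hq0
    have hinf : ({ε : ℂ | q.IsRoot ε}ᶜ : Set ℂ).Infinite := hfin.infinite_compl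
    refine hinf.mono ?_
    intro ε hε
    exact hqeval ε hε
  have h0 := hpeval 0
  rw [hp0, hB0] at h0
  simpa using h0.symm

/-- Strassen's degree-nine equation for the fourth secant variety of
`ℙ² × ℙ² × ℙ²`: if a `3 × 3 × 3` complex tensor `T` is a sum of at most four
rank-one tensors, and its middle slice `B` is invertible, then
`det(A·B⁻¹·C − C·B⁻¹·A) = 0`. -/
theorem strassen_rank_four (T : Fin 3 × Fin 3 × Fin 3 → ℂ)
    (x y z : Fin 4 → Fin 3 → ℂ)
    (hT : ∀ i j k, T (i, j, k) = ∑ m : Fin 4, x m i * y m j * z m k)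
    (A B C : Matrix (Fin 3) (Fin 3) ℂ)
    (hA : ∀ i j, A i j = T (i, j, 0))
    (hB : ∀ i j, B i j = T (i, j, 1))
    (hC : ∀ i j, C i j = T (i, j, 2))
    (hdet : B.det ≠ 0) :
    (A * B⁻¹ * C - C * B⁻¹ * A).det = 0 := by
  have hA' : ∀ i j, A i j = ∑ m : Fin 4, x m i * y m j * z m 0 := fun i j => by
    rw [hA i j, hT]
  have hB' : ∀ i j, B i j = ∑ m : Fin 4, x m i * y m j * z m 1 := fun i j => by
    rw [hB i j, hT]
  have hC' : ∀ i j, C i j = ∑ m : Fin 4, x m i * y m j * z m 2 := fun i j => by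
    rw [hC i j, hT]
  have hinv : B⁻¹ = (B.det)⁻¹ • B.adjugate := by
    rw [Matrix.inv_def, Ring.inverse_eq_inv']
  have h : A * B⁻¹ * C - C * B⁻¹ * A
      = (B.det)⁻¹ • (A * B.adjugate * C - C * B.adjugate * A) := by
    rw [hinv]
    simp only [Matrix.mul_smul, Matrix.smul_mul, smul_sub]
  rw [h, Matrix.det_smul, strassen_adj x y z A B C hA' hB' hC' hdet, mul_zero]
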